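/- For p ≥ 1, the function d(x,y) = ‖x−y‖ / ((1+‖x‖^p)^{1/p} (1+‖y‖^p)^{1/p}) is a metric on any real inner product space; for 0 < p < 1 it is not a metric on ℝ. -/

import Mathlib

open Real

/-- Ptolemy at the origin. -/
lemma ptolemy0 {X : Type*} [NormedAddCommGroup X] [InnerProductSpace ℝ X] (x y z : X) :
    ‖x - y‖ * ‖z‖ ≤ ‖x - z‖ * ‖y‖ + ‖z - y‖ * ‖x‖ := by
  have := EuclideanGeometry.mul_dist_le_mul_dist_add_mul_dist (V := X) x z y (0 : X)
  simpa [dist_eq_norm] using this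

section f
variable {p : ℝ} (hp : 1 ≤ p)
include hp

private lemma hp0 : 0 < p := lt_of_lt_of_le one_pos hp

/-- factoring lemma : (a^p + (a*t)^p)^(1/p) = a * (1+t^p)^(1/p) -/
lemma ffact {a t : ℝ} (ha : 0 ≤ a) (ht : 0 ≤ t) :
    (a ^ p + (a * t) ^ p) ^ (1/p) = a * (1 + t ^ p) ^ (1/p) := by
  have hpne : p ≠ 0 := (hp0 hp).ne'
  rw [Real.mul_rpow ha ht, show a ^ p + a ^ p * t ^ p = a ^ p * (1 + t ^ p) by ring,
    Real.mul_rpow (Real.rpow_nonneg ha p) (by positivity), one_div,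
    Real.rpow_rpow_inv ha hpne]

lemma fmono {s t : ℝ} (hs : 0 ≤ s) (hst : s ≤ t) :
    (1 + s ^ p) ^ (1/p) ≤ (1 + t ^ p) ^ (1/p) := by
  have : s ^ p ≤ t ^ p := Real.rpow_le_rpow hs hst (hp0 hp).le
  exact Real.rpow_le_rpow (by positivity) (by linarith) (by positivity)

lemma frat {s t : ℝ} (hs : 0 ≤ s) (hst : s ≤ t) :
    s * (1 + t ^ p) ^ (1/p) ≤ t * (1 + s ^ p) ^ (1/p) := by
  have ht : 0 ≤ t := hs.trans hst
  rw [← ffact hp hs ht, ← ffact hp ht hs, mul_comm t s]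
  have : s ^ p ≤ t ^ p := Real.rpow_le_rpow hs hst (hp0 hp).le
  exact Real.rpow_le_rpow (by positivity) (by linarith) (by positivity)

lemma fconvexOn : ConvexOn ℝ (Set.Ici 0) (fun t : ℝ => (1 + t ^ p) ^ (1/p)) := by
  refine ⟨convex_Ici 0, fun x hx y hy a b ha hb hab => ?_⟩
  simp only [Set.mem_Ici] at hx hy
  simp only [smul_eq_mul]
  have h := Real.Lp_add_le (Finset.univ : Finset (Fin 2)) ![a, a * x] ![b, b * y] hp
  simp only [Fin.sum_univ_two, Matrix.cons_val_zero, Matrix.cons_val_one, Matrix.head_cons] at h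
  rw [abs_of_nonneg ha, abs_of_nonneg hb, abs_of_nonneg (by positivity : (0:ℝ) ≤ a * x),
    abs_of_nonneg (by positivity : (0:ℝ) ≤ b * y),
    abs_of_nonneg (by positivity : (0:ℝ) ≤ a + b),
    abs_of_nonneg (by positivity : (0:ℝ) ≤ a * x + b * y), hab, Real.one_rpow,
    ffact hp ha hx, ffact hp hb hy] at h
  exact h

lemma fconv3 {x y z : ℝ} (hx : 0 ≤ x) (hxy : x ≤ y) (hyz : y ≤ z) :
    (1 + y ^ p) ^ (1/p) * (z - x) ≤
      (1 + x ^ p) ^ (1/p) * (z - y) + (1 + z ^ p) ^ (1/p) * (y - x) := by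
  rcases eq_or_lt_of_le (hxy.trans hyz) with h | h
  · have hxy' : x = y := le_antisymm hxy (hyz.trans h.ge)
    have hyz' : y = z := le_antisymm hyz (h.ge.trans hxy)
    subst hxy' hyz'
    simp
  · have hzx : 0 < z - x := by linarith
    have hmem : y = ((z - y)/(z - x)) * x + ((y - x)/(z - x)) * z := by
      field_simp; ring
    have hcc := (fconvexOn hp).2 (Set.mem_Ici.2 hx) (Set.mem_Ici.2 (hx.trans (hxy.trans hyz)))
      (show (0:ℝ) ≤ (z - y)/(z - x) from div_nonneg (by linarith) hzx.le)
      (show (0:ℝ) ≤ (y - x)/(z - x) from div_nonneg (by linarith) hzx.le)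
      (by field_simp; ring)
    simp only [smul_eq_mul] at hcc
    rw [← hmem] at hcc
    have := mul_le_mul_of_nonneg_right hcc hzx.le
    calc (1 + y ^ p) ^ (1/p) * (z - x) ≤
        ((z - y)/(z - x) * (1 + x ^ p) ^ (1/p) + (y - x)/(z - x) * (1 + z ^ p) ^ (1/p)) * (z - x) :=
          this
      _ = (1 + x ^ p) ^ (1/p) * (z - y) + (1 + z ^ p) ^ (1/p) * (y - x) := by
          field_simp

end f

/-- the key scalar inequality, asymmetric version -/
lemma keyaux (f : ℝ → ℝ)
    (hfnn : ∀ t, 0 ≤ t → 0 ≤ f t)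
    (hmono : ∀ s t, 0 ≤ s → s ≤ t → f s ≤ f t)
    (hrat : ∀ s t, 0 ≤ s → s ≤ t → s * f t ≤ t * f s)
    (hconv : ∀ x y z, 0 ≤ x → x ≤ y → y ≤ z →
      f y * (z - x) ≤ f x * (z - y) + f z * (y - x))
    (a b c u v w : ℝ) (ha : 0 ≤ a) (hab : a ≤ b) (hc : 0 ≤ c)
    (hu : 0 ≤ u) (hv : 0 ≤ v) (hw : 0 ≤ w)
    (h1 : w ≤ u + v) (h2 : w * c ≤ u * b + v * a) :
    w * f c ≤ u * f b + v * f a := by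
  have hb : 0 ≤ b := ha.trans hab
  rcases le_total c a with hca | hac
  · have h3 := hmono c a hc hca
    have h4 := hmono c b hc (hca.trans hab)
    nlinarith [hfnn c hc, mul_le_mul_of_nonneg_left h3 hv, mul_le_mul_of_nonneg_left h4 hu,
      mul_le_mul_of_nonneg_right h1 (hfnn c hc)]
  rcases lt_or_ge b c with hbc | hcb
  · -- b < c : chord through (b, c)
    have hQ1 : 0 ≤ (u + v - w) * (c * f b - b * f c) := by
      have := hrat b c hb hbc.le
      have h1' : 0 ≤ u + v - w := by linarith
      exact mul_nonneg h1' (by linarith)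
    have hQ2 : 0 ≤ (u * b + v * a - w * c) * (f c - f b) := by
      have := hmono b c hb hbc.le
      exact mul_nonneg (by linarith) (by linarith)
    have hQ3 : 0 ≤ v * (f a * (c - b) - (f b * (c - a) - f c * (b - a))) := by
      have := hconv a b c ha hab hbc.le
      exact mul_nonneg hv (by linarith)
    have H : (c - b) * (w * f c) ≤ (c - b) * (u * f b + v * f a) := by nlinarith
    exact le_of_mul_le_mul_left H (by linarith)
  · -- a ≤ c ≤ b : chord through (a, b)
    rcases eq_or_lt_of_le hab with rfl | hlt
    · -- a = b, so c = a
      have hca : c = a := le_antisymm hcb hac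
      subst hca
      nlinarith [hfnn c hc, mul_le_mul_of_nonneg_right h1 (hfnn c hc)]
    · have hP1 : 0 ≤ (u + v - w) * (b * f a - a * f b) := by
        have := hrat a b ha hab
        exact mul_nonneg (by linarith) (by linarith)
      have hP2 : 0 ≤ (u * b + v * a - w * c) * (f b - f a) := by
        have := hmono a b ha hab
        exact mul_nonneg (by linarith) (by linarith)
      have hP3 : 0 ≤ w * (f a * (b - c) + f b * (c - a) - f c * (b - a)) := by
        have := hconv a c b ha hac hcb
        exact mul_nonneg hw (by linarith)
      have H : (b - a) * (w * f c) ≤ (b - a) * (u * f b + v * f a) := by nlinarith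
      exact le_of_mul_le_mul_left H (by linarith)

lemma key (f : ℝ → ℝ)
    (hfnn : ∀ t, 0 ≤ t → 0 ≤ f t)
    (hmono : ∀ s t, 0 ≤ s → s ≤ t → f s ≤ f t)
    (hrat : ∀ s t, 0 ≤ s → s ≤ t → s * f t ≤ t * f s)
    (hconv : ∀ x y z, 0 ≤ x → x ≤ y → y ≤ z →
      f y * (z - x) ≤ f x * (z - y) + f z * (y - x))
    (a b c u v w : ℝ) (ha : 0 ≤ a) (hb : 0 ≤ b) (hc : 0 ≤ c)
    (hu : 0 ≤ u) (hv : 0 ≤ v) (hw : 0 ≤ w)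
    (h1 : w ≤ u + v) (h2 : w * c ≤ u * b + v * a) :
    w * f c ≤ u * f b + v * f a := by
  rcases le_total a b with hab | hba
  · exact keyaux f hfnn hmono hrat hconv a b c u v w ha hab hc hu hv hw h1 h2
  · have := keyaux f hfnn hmono hrat hconv b a c v u w hb hba hc hv hu hw
      (by linarith) (by linarith)
    linarith

/-- strict concavity three-point form for rpow, 0<p<1 -/
lemma sconc3 {p : ℝ} (hp0 : 0 < p) (hp1 : p < 1) {x y z : ℝ} (hx : 0 ≤ x)
    (hxy : x < y) (hyz : y < z) :
    x ^ p * (z - y) + z ^ p * (y - x) < y ^ p * (z - x) := by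
  have hzx : 0 < z - x := by linarith
  have hmem : y = ((z - y)/(z - x)) * x + ((y - x)/(z - x)) * z := by
    field_simp; ring
  have hcc := (Real.strictConcaveOn_rpow hp0 hp1).2 (Set.mem_Ici.2 hx)
    (Set.mem_Ici.2 (by linarith : (0:ℝ) ≤ z)) (by linarith : x ≠ z)
    (show (0:ℝ) < (z - y)/(z - x) from div_pos (by linarith) hzx)
    (show (0:ℝ) < (y - x)/(z - x) from div_pos (by linarith) hzx)
    (by field_simp; ring)
  simp only [smul_eq_mul] at hcc
  rw [← hmem] at hcc
  have := mul_lt_mul_of_pos_right hcc hzx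
  calc x ^ p * (z - y) + z ^ p * (y - x)
      = ((z - y)/(z - x) * x ^ p + (y - x)/(z - x) * z ^ p) * (z - x) := by
        field_simp
    _ < y ^ p * (z - x) := this

theorem stmt_17 (X : Type*) [NormedAddCommGroup X] [InnerProductSpace ℝ X]
    (p : ℝ) :
    (1 ≤ p →
      let d : X → X → ℝ :=
        fun x y => ‖x - y‖ / ((1 + ‖x‖ ^ p) ^ (1/p) * (1 + ‖y‖ ^ p) ^ (1/p))
      (∀ x y, 0 ≤ d x y) ∧ (∀ x y, d x y = d y x) ∧
      (∀ x y, d x y = 0 ↔ x = y) ∧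
      (∀ x y z, d x y ≤ d x z + d z y)) ∧
    (0 < p → p < 1 →
      ∃ x y z : ℝ,
        |x - z| / ((1 + |x| ^ p) ^ (1/p) * (1 + |z| ^ p) ^ (1/p))
          + |z - y| / ((1 + |z| ^ p) ^ (1/p) * (1 + |y| ^ p) ^ (1/p))
        < |x - y| / ((1 + |x| ^ p) ^ (1/p) * (1 + |y| ^ p) ^ (1/p))) := by
  constructor
  · intro hp
    have hp0 : (0:ℝ) < p := lt_of_lt_of_le one_pos hp
    have Fpos : ∀ x : X, 0 < (1 + ‖x‖ ^ p) ^ (1/p) := fun x =>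
      Real.rpow_pos_of_pos (by positivity) _
    refine ⟨fun x y => div_nonneg (norm_nonneg _) (by positivity), fun x y => ?_, fun x y => ?_,
      fun x y z => ?_⟩
    · dsimp only
      rw [norm_sub_rev, mul_comm]
    · constructor
      · intro h
        rcases div_eq_zero_iff.1 h with h | h
        · exact sub_eq_zero.1 (norm_eq_zero.1 h)
        · exact absurd h (ne_of_gt (mul_pos (Fpos x) (Fpos y)))
      · rintro rfl; simp
    · have hK : ‖x - y‖ * (1 + ‖z‖ ^ p) ^ (1/p) ≤
          ‖x - z‖ * (1 + ‖y‖ ^ p) ^ (1/p) + ‖z - y‖ * (1 + ‖x‖ ^ p) ^ (1/p) := by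
        refine key (fun t => (1 + t ^ p) ^ (1/p)) (fun t ht => (Real.rpow_pos_of_pos
            (by positivity) _).le)
          (fun s t hs hst => fmono hp hs hst) (fun s t hs hst => frat hp hs hst)
          (fun a b c ha hab hbc => fconv3 hp ha hab hbc)
          ‖x‖ ‖y‖ ‖z‖ ‖x - z‖ ‖z - y‖ ‖x - y‖ (norm_nonneg _) (norm_nonneg _) (norm_nonneg _)
          (norm_nonneg _) (norm_nonneg _) (norm_nonneg _) ?_ (ptolemy0 x y z)
        have := dist_triangle x z y
        simpa [dist_eq_norm] using this
      rw [div_add_div _ _ (ne_of_gt (mul_pos (Fpos x) (Fpos z)))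
          (ne_of_gt (mul_pos (Fpos z) (Fpos y))),
        div_le_div_iff₀ (mul_pos (Fpos x) (Fpos y))
          (mul_pos (mul_pos (Fpos x) (Fpos z)) (mul_pos (Fpos z) (Fpos y)))]
      nlinarith [mul_le_mul_of_nonneg_right hK
          (mul_nonneg (mul_nonneg (Fpos x).le (Fpos y).le) (Fpos z).le),
        Fpos x, Fpos y, Fpos z]
  · intro hp0 hp1
    refine ⟨0, 2, 1, ?_⟩
    have h2p : (0:ℝ) < 2 ^ p := Real.rpow_pos_of_pos two_pos p
    norm_num [Real.zero_rpow hp0.ne', Real.one_rpow]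
    set q1 : ℝ := 2 ^ p⁻¹ with hq1def
    set q2 : ℝ := (1 + 2 ^ p) ^ p⁻¹ with hq2def
    have hq1pos : 0 < q1 := Real.rpow_pos_of_pos two_pos _
    have hq2pos : 0 < q2 := Real.rpow_pos_of_pos (by positivity) _
    have hq1gt : 1 < q1 := by
      rw [hq1def, ← Real.rpow_zero 2]
      exact Real.rpow_lt_rpow_left_iff (by norm_num) |>.2 (by positivity)
    set A : ℝ := 2 * q1 - 1 with hAdef
    have hA1 : 1 < A := by simp only [hAdef]; linarith
    have hE : (A + 1) ^ p = 2 * 2 ^ p := by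
      have hA2 : A + 1 = 2 * q1 := by ring
      rw [hA2, Real.mul_rpow (by norm_num) hq1pos.le, hq1def,
        Real.rpow_inv_rpow (by norm_num) hp0.ne']
      ring
    have h1 := sconc3 hp0 hp1 (show (0:ℝ) ≤ 1 by norm_num)
      (show (1:ℝ) < 2 by norm_num) (show (2:ℝ) < A + 1 by linarith)
    have h2 := sconc3 hp0 hp1 (show (0:ℝ) ≤ 1 by norm_num) hA1
      (show A < A + 1 by linarith)
    rw [hE] at h1 h2
    simp only [Real.one_rpow] at h1 h2
    have h4 : 0 < A * (A ^ p - (1 + 2 ^ p)) := by ring_nf at h1 h2 ⊢; nlinarith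
    have h5 : 1 + 2 ^ p < A ^ p := by
      by_contra h
      push_neg at h
      have : A * (A ^ p - (1 + 2 ^ p)) ≤ 0 :=
        mul_nonpos_of_nonneg_of_nonpos (by linarith) (by linarith)
      linarith
    have hq2A : q2 < A := by
      have h6 : (1 + 2 ^ p) ^ p⁻¹ < (A ^ p) ^ p⁻¹ :=
        Real.rpow_lt_rpow (by positivity) h5 (by positivity)
      rw [Real.rpow_rpow_inv (by linarith) hp0.ne'] at h6
      rw [hq2def]
      exact h6
    have h7 : (0:ℝ) < 2 * q1 - 1 - q2 := by linarith
    have e1 : q1⁻¹ + q2⁻¹ * q1⁻¹ = (q2 + 1) / (q1 * q2) := by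
      rw [eq_div_iff (ne_of_gt (mul_pos hq1pos hq2pos))]
      field_simp
    rw [e1, div_lt_div_iff₀ (mul_pos hq1pos hq2pos) hq2pos]
    nlinarith [mul_pos (mul_pos hq1pos hq2pos) h7, hq1pos, hq2pos]
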